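/- Let (ω_j)_{j∈ℕ} be a sequence of functions ω_j : (0,∞) → ℝ with ω_j ≥ 0, such that each κ ↦ −ω_j(κ)/κ is non-decreasing, and suppose there is a function M : (0,∞) → ℝ with ω_j(κ) ≤ M(κ) for all j and κ. Then for almost every κ₀ > 0 there exist a constant c and a subsequence (j_k) such that the derivative d/dκ(−ω_{j_k}(κ)/κ) exists at κ₀ and satisfies 0 ≤ d/dκ|_{κ=κ₀}(−ω_{j_k}(κ)/κ) ≤ c for all k. -/

import Mathlib

open Set Filter MeasureTheory Function

/-- Struwe's monotonicity trick: if `ω_j ≥ 0`, each `κ ↦ −ω_j(κ)/κ` is non-decreasing on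
`(0,∞)`, and `ω_j(κ) ≤ M(κ)` uniformly in `j`, then for almost every `κ₀ > 0` there is a
constant `c` and a subsequence along which `κ ↦ −ω_j(κ)/κ` is differentiable at `κ₀`
with derivative in `[0, c]`. -/
theorem struwe_ae_derivative_bound
    (ω : ℕ → ℝ → ℝ) (M : ℝ → ℝ)
    (hnonneg : ∀ j κ, 0 < κ → 0 ≤ ω j κ)
    (hmono : ∀ j, ∀ κ κ' : ℝ, 0 < κ → κ ≤ κ' → -ω j κ / κ ≤ -ω j κ' / κ')
    (hbound : ∀ j κ, 0 < κ → ω j κ ≤ M κ) :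
    ∀ᵐ κ₀ ∂(MeasureTheory.volume.restrict (Ioi (0 : ℝ))),
      ∃ c : ℝ, ∃ φ : ℕ → ℕ, StrictMono φ ∧
        ∀ k, ∃ d : ℝ, HasDerivAt (fun κ => -ω (φ k) κ / κ) d κ₀ ∧ 0 ≤ d ∧ d ≤ c := by
  -- notation
  set g : ℕ → ℝ → ℝ := fun j κ => -ω j κ / κ with hg
  set a : ℕ → ℝ := fun n => 1 / (n + 1) with ha
  have hapos : ∀ n : ℕ, 0 < a n := fun n => by positivity
  -- extended functions, monotone on all of ℝ
  set f : ℕ → ℕ → ℝ → ℝ := fun n j κ => g j (max κ (a n)) with hf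
  have hmaxpos : ∀ (n : ℕ) (κ : ℝ), 0 < max κ (a n) :=
    fun n κ => lt_of_lt_of_le (hapos n) (le_max_right _ _)
  have hfm : ∀ n j, Monotone (f n j) := by
    intro n j κ κ' h
    exact hmono j _ _ (hmaxpos n κ) (max_le_max h le_rfl)
  -- bounds on f
  have hf_le : ∀ n j κ, f n j κ ≤ 0 := by
    intro n j κ
    have h1 := hnonneg j _ (hmaxpos n κ)
    have h2 : -ω j (max κ (a n)) ≤ 0 := by linarith
    exact div_nonpos_of_nonpos_of_nonneg h2 (hmaxpos n κ).le
  have hf_ge : ∀ n j κ, -(M (a n) / a n) ≤ f n j κ := by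
    intro n j κ
    have h1 : f n j (a n) ≤ f n j κ := by
      rcases le_total κ (a n) with h | h
      · have : max κ (a n) = a n := max_eq_right h
        simp only [hf, this, max_self]
        exact le_rfl
      · exact hfm n j (by simpa using h)
    refine le_trans ?_ h1
    have hb := hbound j (a n) (hapos n)
    have : f n j (a n) = -(ω j (a n) / a n) := by
      simp only [hf, hg, max_self, neg_div]
    rw [this, neg_le_neg_iff]
    gcongr
  -- the derivative candidates
  set D : ℕ → ℕ → ℝ → ENNReal := fun n j x =>
    MeasureTheory.Measure.rnDeriv (hfm n j).stieltjesFunction.measure volume x with hD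
  -- a.e. differentiability of all the extensions
  have hdiff : ∀ᵐ x ∂(volume : Measure ℝ), ∀ n j,
      HasDerivAt (f n j) (D n j x).toReal x := by
    rw [ae_all_iff]
    intro n
    rw [ae_all_iff]
    intro j
    exact (hfm n j).ae_hasDerivAt
  -- uniform bound on Stieltjes measures of compact intervals
  have hmeas_bound : ∀ n j, (hfm n j).stieltjesFunction.measure (Icc (a n) n)
      ≤ ENNReal.ofReal (M (a n) / a n) := by
    intro n j
    rw [StieltjesFunction.measure_Icc]
    apply ENNReal.ofReal_le_ofReal
    have hub : (hfm n j).stieltjesFunction (n : ℝ) ≤ 0 := by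
      rw [Monotone.stieltjesFunction_eq]
      exact le_trans ((hfm n j).rightLim_le (lt_add_one (n : ℝ))) (hf_le n j _)
    have hlb : -(M (a n) / a n) ≤ leftLim ((hfm n j).stieltjesFunction) (a n) := by
      refine le_trans ?_ (((hfm n j).stieltjesFunction).mono.le_leftLim
        (show a n - 1 < a n by linarith))
      rw [Monotone.stieltjesFunction_eq]
      exact le_trans (hf_ge n j _) ((hfm n j).le_rightLim le_rfl)
    linarith
  -- Fatou: liminf of derivatives is a.e. finite on each Icc (a n) n
  have hfatou : ∀ n : ℕ, ∀ᵐ x ∂(volume.restrict (Icc (a n) (n : ℝ))),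
      Filter.liminf (fun j => D n j x) Filter.atTop < ⊤ := by
    intro n
    apply ae_lt_top (Measurable.liminf (fun j =>
      MeasureTheory.Measure.measurable_rnDeriv _ _))
    have h1 : ∫⁻ x in Icc (a n) (n : ℝ), Filter.liminf (fun j => D n j x) Filter.atTop
        ≤ Filter.liminf (fun j => ∫⁻ x in Icc (a n) (n : ℝ), D n j x) Filter.atTop :=
      lintegral_liminf_le (fun j => MeasureTheory.Measure.measurable_rnDeriv _ _)
    have h2 : Filter.liminf (fun j => ∫⁻ x in Icc (a n) (n : ℝ), D n j x) Filter.atTop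
        ≤ ENNReal.ofReal (M (a n) / a n) := by
      refine Filter.liminf_le_of_frequently_le (Filter.Frequently.of_forall fun j => ?_) (by isBoundedDefault)
      exact le_trans (MeasureTheory.Measure.setLIntegral_rnDeriv_le _) (hmeas_bound n j)
    exact ne_top_of_le_ne_top (by simp) (h1.trans h2)
  -- combine on each piece Ioo (a n) n
  have hpiece : ∀ n : ℕ, ∀ᵐ x ∂(volume.restrict (Ioo (a n) (n : ℝ))),
      ∃ c : ℝ, ∃ φ : ℕ → ℕ, StrictMono φ ∧
        ∀ k, ∃ d : ℝ, HasDerivAt (fun κ => -ω (φ k) κ / κ) d x ∧ 0 ≤ d ∧ d ≤ c := by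
    intro n
    have h1 : ∀ᵐ x ∂(volume.restrict (Ioo (a n) (n : ℝ))), ∀ j,
        HasDerivAt (f n j) (D n j x).toReal x :=
      ae_restrict_of_ae (hdiff.mono fun x hx j => hx n j)
    have h2 : ∀ᵐ x ∂(volume.restrict (Ioo (a n) (n : ℝ))),
        Filter.liminf (fun j => D n j x) Filter.atTop < ⊤ :=
      ae_restrict_of_ae_restrict_of_subset Ioo_subset_Icc_self (hfatou n)
    have h3 : ∀ᵐ x ∂(volume.restrict (Ioo (a n) (n : ℝ))), x ∈ Ioo (a n) (n : ℝ) :=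
      ae_restrict_mem measurableSet_Ioo
    filter_upwards [h1, h2, h3] with x hx1 hx2 hx3
    -- the liminf is finite; find subsequence with bounded derivative
    set T := Filter.liminf (fun j => D n j x) Filter.atTop with hT
    have hTlt : T < T + 1 := ENNReal.lt_add_right hx2.ne one_ne_zero
    have hfreq : ∃ᶠ j in Filter.atTop, D n j x < T + 1 :=
      Filter.frequently_lt_of_liminf_lt (by isBoundedDefault) hTlt
    obtain ⟨φ, hφ, hφlt⟩ := Filter.extraction_of_frequently_atTop hfreq
    refine ⟨(T + 1).toReal, φ, hφ, fun k => ?_⟩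
    refine ⟨(D n (φ k) x).toReal, ?_, ENNReal.toReal_nonneg, ?_⟩
    · -- transfer differentiability from f to g
      apply (hx1 (φ k)).congr_of_eventuallyEq
      have hopen : Ioi (a n) ∈ nhds x := Ioi_mem_nhds hx3.1
      filter_upwards [hopen] with y hy
      simp only [hf, hg, max_eq_left (le_of_lt (mem_Ioi.mp hy))]
    · exact ENNReal.toReal_mono (by simp [hx2.ne]) (hφlt k).le
  -- glue the pieces: Ioi 0 = ⋃ n, Ioo (a n) n
  have hcover : Ioi (0 : ℝ) ⊆ ⋃ n : ℕ, Ioo (a n) (n : ℝ) := by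
    intro x hx
    simp only [mem_Ioi] at hx
    obtain ⟨m, hm⟩ := exists_nat_gt x
    obtain ⟨p, hp⟩ := exists_nat_gt (1 / x)
    refine mem_iUnion.2 ⟨max m p, ?_⟩
    constructor
    · have hp' : 1 / x < (max m p : ℕ) + 1 := by
        have : (p : ℝ) ≤ ((max m p : ℕ) : ℝ) := by exact_mod_cast le_max_right m p
        linarith
      rw [ha]
      rw [div_lt_iff₀ hx] at hp'
      rw [div_lt_iff₀ (by positivity)]
      linarith
    · have : (m : ℝ) ≤ ((max m p : ℕ) : ℝ) := by exact_mod_cast le_max_left m p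
      exact lt_of_lt_of_le hm this
  have : ∀ᵐ x ∂(volume.restrict (⋃ n : ℕ, Ioo (a n) (n : ℝ))),
      ∃ c : ℝ, ∃ φ : ℕ → ℕ, StrictMono φ ∧
        ∀ k, ∃ d : ℝ, HasDerivAt (fun κ => -ω (φ k) κ / κ) d x ∧ 0 ≤ d ∧ d ≤ c :=
    (ae_restrict_iUnion_iff _ _).2 hpiece
  exact ae_restrict_of_ae_restrict_of_subset hcover this
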